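/- Reduction gadget correctness: let G = (V,E) be a simple graph and construct the bipartite graph H whose vertices are V ∪ E ∪ {q}, with each edge e = {u,v} ∈ E joined to u, v, and q. Then for the derived graph G_P on V ∪ {q}, where two type-1 vertices are adjacent iff they have a common neighbor in H among the edge-vertices: G_P restricted to V equals G, and q is adjacent in G_P to exactly the non-isolated vertices of V. Consequently, G contains a clique of size m among non-isolated vertices iff G_P contains a clique of size m+1 containing q. -/
import Mathlib


variable {V : Type*} [DecidableEq V]

/-- Incidence in the gadget bipartite graph `H`: the type-1 vertex `x`
(a vertex of `G`, or the extra vertex `q = none`) is adjacent in `H` to the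
edge-vertex `e` iff `x` is an endpoint of `e`, and `q` is adjacent to every
edge-vertex. -/
def inc {V : Type*} (x : Option V) (e : Sym2 V) : Prop :=
  match x with
  | some u => u ∈ e
  | none => True

/-- Adjacency in the derived graph `G_P` on `V ∪ {q}`: two distinct type-1
vertices are adjacent iff some edge-vertex of `H` is adjacent to both. -/
def DAdj {V : Type*} (G : SimpleGraph V) (x y : Option V) : Prop :=
  x ≠ y ∧ ∃ e ∈ G.edgeSet, inc x e ∧ inc y e

omit [DecidableEq V] in
lemma dadj_some_some (G : SimpleGraph V) (u v : V) :
    DAdj G (some u) (some v) ↔ G.Adj u v := by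
  constructor
  · rintro ⟨hne, e, he, hu, hv⟩
    have huv : u ≠ v := fun h => hne (by rw [h])
    have : e = s(u, v) := (Sym2.mem_and_mem_iff huv).mp ⟨hu, hv⟩
    rwa [this, SimpleGraph.mem_edgeSet] at he
  · intro h
    exact ⟨by simpa using h.ne, s(u, v), h, Sym2.mem_mk_left u v, Sym2.mem_mk_right u v⟩

omit [DecidableEq V] in
lemma dadj_none_some (G : SimpleGraph V) (u : V) :
    DAdj G none (some u) ↔ ∃ w, G.Adj u w := by
  constructor
  · rintro ⟨-, e, he, -, hu⟩
    induction e with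
    | h a b =>
      rw [SimpleGraph.mem_edgeSet] at he
      rcases Sym2.mem_iff.mp hu with rfl | rfl
      · exact ⟨b, he⟩
      · exact ⟨a, he.symm⟩
  · rintro ⟨w, hw⟩
    exact ⟨by simp, s(u, w), hw, trivial, Sym2.mem_mk_left u w⟩

/-- Reduction gadget correctness: `G_P` restricted to `V` equals `G`; `q` is
adjacent in `G_P` to exactly the non-isolated vertices; and `G` has a clique of
size `m` among non-isolated vertices iff `G_P` has a clique of size `m+1`
containing `q`. -/
theorem stmt17 (G : SimpleGraph V) :
    (∀ u v : V, DAdj G (some u) (some v) ↔ G.Adj u v) ∧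
    (∀ u : V, DAdj G none (some u) ↔ ∃ w, G.Adj u w) ∧
    (∀ m : ℕ,
      (∃ S : Finset V, S.card = m ∧ (∀ x ∈ S, ∃ w, G.Adj x w) ∧
        ∀ x ∈ S, ∀ y ∈ S, x ≠ y → G.Adj x y) ↔
      (∃ T : Finset (Option V), T.card = m + 1 ∧ none ∈ T ∧
        ∀ x ∈ T, ∀ y ∈ T, x ≠ y → DAdj G x y)) := by
  refine ⟨dadj_some_some G, dadj_none_some G, fun m => ⟨?_, ?_⟩⟩
  · rintro ⟨S, hcard, hni, hcl⟩
    refine ⟨insert none (S.map Function.Embedding.some), ?_, Finset.mem_insert_self _ _, ?_⟩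
    · rw [Finset.card_insert_of_notMem (by simp), Finset.card_map, hcard]
    · intro x hx y hy hxy
      simp only [Finset.mem_insert, Finset.mem_map, Function.Embedding.some_apply] at hx hy
      rcases hx with rfl | ⟨a, ha, rfl⟩
      · rcases hy with rfl | ⟨b, hb, rfl⟩
        · exact absurd rfl hxy
        · exact (dadj_none_some G b).mpr (hni b hb)
      · rcases hy with rfl | ⟨b, hb, rfl⟩
        · have h := (dadj_none_some G a).mpr (hni a ha)
          exact ⟨hxy, h.2.imp fun e ⟨he, _, hm⟩ => ⟨he, hm, trivial⟩⟩
        · exact (dadj_some_some G a b).mpr (hcl a ha b hb (by simpa using hxy))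
  · rintro ⟨T, hcard, hq, hcl⟩
    refine ⟨T.eraseNone, ?_, ?_, ?_⟩
    · have : T.eraseNone.card + 1 = T.card := by
        rw [← Finset.card_erase_add_one hq, ← Finset.map_some_eraseNone T,
          Finset.card_map]
      omega
    · intro x hx
      exact (dadj_none_some G x).mp (hcl none hq (some x) (Finset.mem_eraseNone.mp hx) (by simp))
    · intro x hx y hy hxy
      exact (dadj_some_some G x y).mp (hcl (some x) (Finset.mem_eraseNone.mp hx)
        (some y) (Finset.mem_eraseNone.mp hy) (by simpa using hxy))
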